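/- Let A ∈ ℂ^{n×n}, B ∈ ℂ^{n×m}, C ∈ ℂ^{p×n}, D ∈ ℂ^{p×m}, and let G = C (z I − A)⁻¹ B + D be the associated p×m transfer matrix with entries in the field ℂ(z) of rational functions (well-defined since det(z I − A) is a nonzero polynomial). Then the rank of G over ℂ(z) equals m (full column normal rank) if and only if the system has a left inverse in the time-domain sense: for every input u : ℕ → ℂ^m, if the trajectory with x(0) = 0, x(k+1) = A x(k) + B u(k) produces output y(k) = C x(k) + D u(k) = 0 for all k ≥ 0, then u(k) = 0 for all k ≥ 0. -/

import Mathlib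

set_option synthInstance.maxHeartbeats 1000000
set_option maxHeartbeats 1000000

noncomputable section

/-- State trajectory of `x(k+1) = A x(k) + B u(k)` with zero initial state. -/
def trajZero {n m : ℕ} (A : Matrix (Fin n) (Fin n) ℂ) (B : Matrix (Fin n) (Fin m) ℂ)
    (u : ℕ → Fin m → ℂ) : ℕ → Fin n → ℂ
  | 0 => 0
  | k + 1 => A.mulVec (trajZero A B u k) + B.mulVec (u k)

/-- Transfer matrix `G(z) = C (zI - A)⁻¹ B + D` over the field `ℂ(z)`. -/
def transferMatrix {n m p : ℕ} (A : Matrix (Fin n) (Fin n) ℂ)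
    (B : Matrix (Fin n) (Fin m) ℂ) (C : Matrix (Fin p) (Fin n) ℂ)
    (D : Matrix (Fin p) (Fin m) ℂ) : Matrix (Fin p) (Fin m) (RatFunc ℂ) :=
  C.map (algebraMap ℂ (RatFunc ℂ)) *
    ((RatFunc.X : RatFunc ℂ) • (1 : Matrix (Fin n) (Fin n) (RatFunc ℂ)) -
      A.map (algebraMap ℂ (RatFunc ℂ)))⁻¹ *
    B.map (algebraMap ℂ (RatFunc ℂ)) + D.map (algebraMap ℂ (RatFunc ℂ))

section Psi
open Polynomial HahnSeries

def xinv : LaurentSeries ℂ := HahnSeries.single (-1 : ℤ) (1:ℂ)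

lemma X_mul_xinv : (HahnSeries.single (1:ℤ) (1:ℂ)) * xinv = 1 := by
  rw [xinv, HahnSeries.single_mul_single]; norm_num

lemma xinv_pow (i : ℕ) : xinv ^ i = HahnSeries.single (-(i:ℤ)) (1:ℂ) := by
  rw [xinv, HahnSeries.single_pow]; simp

lemma smul_single (a : ℂ) (b : ℤ) : a • (HahnSeries.single b (1:ℂ)) = HahnSeries.single b a := by
  ext c
  by_cases h : c = b <;> simp [h, HahnSeries.coeff_single]

lemma single_eq_ofPS (k : ℕ) (a : ℂ) :
    HahnSeries.single (k : ℤ) a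
      = HahnSeries.ofPowerSeries ℤ ℂ ((Polynomial.monomial k a : Polynomial ℂ) : PowerSeries ℂ) := by
  rw [← Polynomial.C_mul_X_pow_eq_monomial]
  push_cast [Polynomial.coe_mul, Polynomial.coe_C, Polynomial.coe_pow, Polynomial.coe_X]
  rw [HahnSeries.ofPowerSeries_C, HahnSeries.ofPowerSeries_X, HahnSeries.single_pow]
  rw [HahnSeries.C_apply, HahnSeries.single_mul_single]
  simp

lemma algMapC (a : ℂ) : algebraMap ℂ (LaurentSeries ℂ) a = HahnSeries.single 0 a := by
  rw [show (algebraMap ℂ (LaurentSeries ℂ))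
      = (algebraMap (PowerSeries ℂ) (LaurentSeries ℂ)).comp (algebraMap ℂ (PowerSeries ℂ))
    from rfl, RingHom.comp_apply, LaurentSeries.coe_algebraMap, PowerSeries.algebraMap_apply,
    Algebra.algebraMap_self, RingHom.id_apply, HahnSeries.ofPowerSeries_C, HahnSeries.C_apply]

def phi : Polynomial ℂ →+* LaurentSeries ℂ := (Polynomial.aeval xinv).toRingHom

lemma phi_apply (q : Polynomial ℂ) : phi q = Polynomial.aeval xinv q := rfl

lemma bridge (M : ℕ) (q : Polynomial ℂ) (h : q.natDegree ≤ M) :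
    HahnSeries.single (M : ℤ) (1:ℂ) * phi q
      = HahnSeries.ofPowerSeries ℤ ℂ ((Polynomial.reflect M q : Polynomial ℂ) : PowerSeries ℂ) := by
  have hrefl : (Polynomial.reflect M q : Polynomial ℂ)
      = ∑ i ∈ Finset.range (q.natDegree + 1), Polynomial.monomial (M - i) (q.coeff i) := by
    conv_lhs => rw [Polynomial.as_sum_range q]
    rw [show (Polynomial.reflect M : Polynomial ℂ → Polynomial ℂ)
        = ⇑(AddMonoidHom.mk' (Polynomial.reflect M) (fun f g => Polynomial.reflect_add f g M))
        from rfl, map_sum]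
    refine Finset.sum_congr rfl fun i hi => ?_
    simp only [Finset.mem_range] at hi
    simp only [AddMonoidHom.mk'_apply]
    rw [← Polynomial.C_mul_X_pow_eq_monomial, Polynomial.reflect_C_mul_X_pow,
      Polynomial.revAt_le (by omega), Polynomial.C_mul_X_pow_eq_monomial]
  rw [phi_apply, Polynomial.aeval_eq_sum_range, Finset.mul_sum, hrefl]
  rw [← Polynomial.coeToPowerSeries.ringHom_apply, map_sum, map_sum]
  simp only [Polynomial.coeToPowerSeries.ringHom_apply]
  refine Finset.sum_congr rfl fun i hi => ?_
  simp only [Finset.mem_range] at hi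
  rw [Algebra.smul_def, algMapC, xinv_pow, HahnSeries.single_mul_single,
    HahnSeries.single_mul_single]
  have h2 : ((M:ℤ) + ((0:ℤ) + -(i:ℤ))) = ((M - i : ℕ) : ℤ) := by omega
  rw [h2, one_mul, mul_one, single_eq_ofPS]

lemma phi_injective : Function.Injective phi := by
  rw [injective_iff_map_eq_zero]
  intro q hq
  by_contra hne
  have h0 : HahnSeries.single (q.natDegree : ℤ) (1:ℂ) * phi q = 0 := by rw [hq, mul_zero]
  rw [bridge q.natDegree q le_rfl] at h0
  have h1 : ((Polynomial.reflect q.natDegree q : Polynomial ℂ) : PowerSeries ℂ) = 0 :=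
    HahnSeries.ofPowerSeries_injective (by rw [h0, map_zero])
  have h2 : Polynomial.reflect q.natDegree q = 0 := by
    exact_mod_cast Polynomial.coe_eq_zero_iff.mp h1
  have h3 : (Polynomial.reflect q.natDegree q).coeff 0 = q.leadingCoeff := by
    rw [Polynomial.coeff_reflect, Polynomial.revAt_le (Nat.zero_le _), Nat.sub_zero,
      Polynomial.leadingCoeff]
  rw [h2] at h3
  simp only [Polynomial.coeff_zero] at h3
  exact hne (Polynomial.leadingCoeff_eq_zero.mp h3.symm)

def psi : RatFunc ℂ →+* LaurentSeries ℂ := IsFractionRing.lift phi_injective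

lemma psi_algebraMap (q : Polynomial ℂ) : psi (algebraMap _ _ q) = phi q :=
  IsFractionRing.lift_algebraMap phi_injective q

lemma psi_X : psi RatFunc.X = xinv := by
  rw [← RatFunc.algebraMap_X, psi_algebraMap, phi_apply, Polynomial.aeval_X]

lemma psi_C (c : ℂ) : psi (algebraMap ℂ (RatFunc ℂ) c) = algebraMap ℂ (LaurentSeries ℂ) c := by
  rw [show (algebraMap ℂ (RatFunc ℂ)) c = algebraMap (Polynomial ℂ) (RatFunc ℂ) (Polynomial.C c) by
    simp [RatFunc.algebraMap_C], psi_algebraMap, phi_apply, Polynomial.aeval_C]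

end Psi

namespace NRL
abbrev PS := PowerSeries ℂ

variable {n m p : ℕ} (A : Matrix (Fin n) (Fin n) ℂ) (B : Matrix (Fin n) (Fin m) ℂ)
  (C : Matrix (Fin p) (Fin n) ℂ) (D : Matrix (Fin p) (Fin m) ℂ)

def Rser : Matrix (Fin n) (Fin n) PS := Matrix.of fun i j => PowerSeries.mk fun k => (A^k) i j

def Eser : Matrix (Fin n) (Fin n) PS := 1 - (PowerSeries.X : PS) • (A.map (algebraMap ℂ PS))

lemma coeff_const_mul_ser {a b : ℕ} (M : Matrix (Fin a) (Fin b) ℂ)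
    (N : Fin b → PS) (k : ℕ) (i : Fin a) :
    PowerSeries.coeff k (∑ l, M.map (algebraMap ℂ PS) i l * N l)
      = ∑ l, M i l * PowerSeries.coeff k (N l) := by
  rw [map_sum]
  refine Finset.sum_congr rfl fun l _ => ?_
  rw [Matrix.map_apply, show algebraMap ℂ PS (M i l) = PowerSeries.C (M i l) from rfl,
    PowerSeries.coeff_C_mul]

lemma coeff_AR (k : ℕ) (i j : Fin n) :
    PowerSeries.coeff k (((A.map (algebraMap ℂ PS)) * Rser A) i j) = (A^(k+1)) i j := by
  rw [Matrix.mul_apply, coeff_const_mul_ser]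
  simp only [Rser, Matrix.of_apply, PowerSeries.coeff_mk]
  rw [← Matrix.mul_apply, ← pow_succ']

lemma coeff_RA (k : ℕ) (i j : Fin n) :
    PowerSeries.coeff k ((Rser A * (A.map (algebraMap ℂ PS))) i j) = (A^(k+1)) i j := by
  rw [Matrix.mul_apply, map_sum]
  have : ∀ l, PowerSeries.coeff k (Rser A i l * A.map (algebraMap ℂ PS) l j)
      = (A^k) i l * A l j := by
    intro l
    rw [Matrix.map_apply, show algebraMap ℂ PS (A l j) = PowerSeries.C (A l j) from rfl,
      PowerSeries.coeff_mul_C, Rser, Matrix.of_apply, PowerSeries.coeff_mk]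
  rw [Finset.sum_congr rfl fun l _ => this l, ← Matrix.mul_apply, ← pow_succ]

lemma coeff_R (k : ℕ) (i j : Fin n) :
    PowerSeries.coeff k (Rser A i j) = (A^k) i j := by
  rw [Rser, Matrix.of_apply, PowerSeries.coeff_mk]

lemma E_mul_R : Eser A * Rser A = 1 := by
  refine Matrix.ext fun i j => PowerSeries.ext fun k => ?_
  rw [Eser, sub_mul, one_mul, Matrix.smul_mul, Matrix.sub_apply, Matrix.smul_apply, map_sub,
    smul_eq_mul]
  cases k with
  | zero =>
    rw [PowerSeries.coeff_zero_X_mul, coeff_R, sub_zero, pow_zero, Matrix.one_apply,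
      Matrix.one_apply]
    by_cases h : i = j <;> simp [h]
  | succ k =>
    rw [PowerSeries.coeff_succ_X_mul, coeff_R, coeff_AR, sub_self, Matrix.one_apply]
    by_cases h : i = j <;> simp [h]

lemma R_mul_E : Rser A * Eser A = 1 := by
  refine Matrix.ext fun i j => PowerSeries.ext fun k => ?_
  rw [Eser, mul_sub, mul_one, Matrix.mul_smul, Matrix.sub_apply, Matrix.smul_apply, map_sub,
    smul_eq_mul]
  cases k with
  | zero =>
    rw [PowerSeries.coeff_zero_X_mul, coeff_R, sub_zero, pow_zero, Matrix.one_apply,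
      Matrix.one_apply]
    by_cases h : i = j <;> simp [h]
  | succ k =>
    rw [PowerSeries.coeff_succ_X_mul, coeff_R, coeff_RA, sub_self, Matrix.one_apply]
    by_cases h : i = j <;> simp [h]

def Hser : Matrix (Fin p) (Fin m) PS :=
  D.map (algebraMap ℂ PS) +
    (PowerSeries.X : PS) • (C.map (algebraMap ℂ PS) * Rser A * B.map (algebraMap ℂ PS))

lemma coeff_CRB (k : ℕ) (i : Fin p) (j : Fin m) :
    PowerSeries.coeff k ((C.map (algebraMap ℂ PS) * Rser A * B.map (algebraMap ℂ PS)) i j)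
      = (C * A^k * B) i j := by
  rw [Matrix.mul_apply, map_sum]
  have : ∀ l, PowerSeries.coeff k ((C.map (algebraMap ℂ PS) * Rser A) i l
      * B.map (algebraMap ℂ PS) l j) = (C * A^k) i l * B l j := by
    intro l
    rw [Matrix.map_apply, show algebraMap ℂ PS (B l j) = PowerSeries.C (B l j) from rfl,
      PowerSeries.coeff_mul_C, Matrix.mul_apply, coeff_const_mul_ser]
    simp only [coeff_R]
    rw [← Matrix.mul_apply]
  rw [Finset.sum_congr rfl fun l _ => this l, ← Matrix.mul_apply]

lemma coeff_H_zero (i : Fin p) (j : Fin m) :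
    PowerSeries.coeff 0 (Hser A B C D i j) = D i j := by
  rw [Hser, Matrix.add_apply, Matrix.smul_apply, map_add, smul_eq_mul,
    PowerSeries.coeff_zero_X_mul, add_zero, Matrix.map_apply,
    show algebraMap ℂ PS (D i j) = PowerSeries.C (D i j) from rfl, PowerSeries.coeff_zero_C]

lemma coeff_H_succ (k : ℕ) (i : Fin p) (j : Fin m) :
    PowerSeries.coeff (k+1) (Hser A B C D i j) = (C * A^k * B) i j := by
  rw [Hser, Matrix.add_apply, Matrix.smul_apply, map_add, smul_eq_mul,
    PowerSeries.coeff_succ_X_mul, coeff_CRB, Matrix.map_apply,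
    show algebraMap ℂ PS (D i j) = PowerSeries.C (D i j) from rfl, PowerSeries.coeff_C]
  simp

def Hcoef : ℕ → Matrix (Fin p) (Fin m) ℂ
  | 0 => D
  | (a+1) => C * A^a * B

lemma coeff_H (a : ℕ) (i : Fin p) (j : Fin m) :
    PowerSeries.coeff a (Hser A B C D i j) = Hcoef A B C D a i j := by
  cases a with
  | zero => rw [coeff_H_zero]; rfl
  | succ a => rw [coeff_H_succ]; rfl

lemma traj_eq (u : ℕ → Fin m → ℂ) (k : ℕ) :
    trajZero A B u k = ∑ j ∈ Finset.range k, (A^(k-1-j)).mulVec (B.mulVec (u j)) := by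
  induction k with
  | zero => simp [trajZero]
  | succ k ih =>
    show A.mulVec (trajZero A B u k) + B.mulVec (u k) = _
    have hmap : A.mulVec (∑ j ∈ Finset.range k, (A^(k-1-j)).mulVec (B.mulVec (u j)))
        = ∑ j ∈ Finset.range k, A.mulVec ((A^(k-1-j)).mulVec (B.mulVec (u j))) := by
      show A.mulVecLin _ = _
      rw [map_sum]
      rfl
    rw [ih, hmap, Finset.sum_range_succ]
    congr 1
    · refine Finset.sum_congr rfl fun j hj => ?_
      simp only [Finset.mem_range] at hj
      have he : k + 1 - 1 - j = (k - 1 - j) + 1 := by omega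
      rw [he, pow_succ', ← Matrix.mulVec_mulVec]
    · have he : k + 1 - 1 - k = 0 := by omega
      rw [he, pow_zero, Matrix.one_mulVec]

lemma output_eq (u : ℕ → Fin m → ℂ) (k : ℕ) :
    C.mulVec (trajZero A B u k) + D.mulVec (u k)
      = ∑ a ∈ Finset.range (k+1), (Hcoef A B C D a).mulVec (u (k - a)) := by
  have h0 : (Hcoef A B C D 0).mulVec (u (k - 0)) = D.mulVec (u k) := by
    rw [Nat.sub_zero]; rfl
  have hmap : C.mulVec (∑ j ∈ Finset.range k, (A^(k-1-j)).mulVec (B.mulVec (u j)))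
      = ∑ j ∈ Finset.range k, C.mulVec ((A^(k-1-j)).mulVec (B.mulVec (u j))) := by
    show C.mulVecLin _ = _
    rw [map_sum]
    rfl
  rw [traj_eq, hmap, Finset.sum_range_succ', h0]
  congr 1
  refine Eq.trans ?_
    (Finset.sum_range_reflect (fun i => (Hcoef A B C D (i+1)).mulVec (u (k-(i+1)))) k)
  refine Finset.sum_congr rfl fun j hj => ?_
  simp only [Finset.mem_range] at hj
  rw [Matrix.mulVec_mulVec, Matrix.mulVec_mulVec]
  have h1 : k - (k - 1 - j + 1) = j := by omega
  rw [h1]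
  rfl

lemma coeff_H_mulVec (u : ℕ → Fin m → ℂ) (k : ℕ) (i : Fin p) :
    PowerSeries.coeff k ((Hser A B C D).mulVec (fun j => PowerSeries.mk fun t => u t j) i)
      = (∑ a ∈ Finset.range (k+1), (Hcoef A B C D a).mulVec (u (k - a))) i := by
  have hmv : (Hser A B C D).mulVec (fun j => PowerSeries.mk fun t => u t j) i
      = ∑ j, Hser A B C D i j * PowerSeries.mk fun t => u t j := rfl
  rw [hmv, map_sum]
  have h1 : ∀ j, PowerSeries.coeff k (Hser A B C D i j * PowerSeries.mk fun t => u t j)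
      = ∑ ab ∈ Finset.HasAntidiagonal.antidiagonal k, Hcoef A B C D ab.1 i j * u ab.2 j := by
    intro j
    rw [PowerSeries.coeff_mul]
    exact Finset.sum_congr rfl fun ab _ => by rw [coeff_H, PowerSeries.coeff_mk]
  rw [Finset.sum_congr rfl fun j _ => h1 j, Finset.sum_comm, Finset.sum_apply]
  rw [Finset.Nat.sum_antidiagonal_eq_sum_range_succ (fun a b => ∑ j, Hcoef A B C D a i j * u b j) k]
  rfl

lemma output_zero_iff (u : ℕ → Fin m → ℂ) :
    (∀ k, C.mulVec (trajZero A B u k) + D.mulVec (u k) = 0)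
      ↔ (Hser A B C D).mulVec (fun j => PowerSeries.mk fun t => u t j) = 0 := by
  constructor
  · intro h
    funext i
    refine PowerSeries.ext fun k => ?_
    rw [coeff_H_mulVec, ← output_eq, h k]
    simp
  · intro h k
    rw [output_eq]
    funext i
    have := coeff_H_mulVec A B C D u k i
    rw [h] at this
    simp only [Pi.zero_apply, map_zero] at this
    simpa using this.symm

end NRL

section Bridge
namespace NRL
open HahnSeries

abbrev LS := LaurentSeries ℂ

def oP : PS →+* LS := HahnSeries.ofPowerSeries ℤ ℂ

lemma oP_injective : Function.Injective (oP : PS →+* LS) :=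
  HahnSeries.ofPowerSeries_injective

lemma oP_X : oP (PowerSeries.X : PS) = HahnSeries.single (1:ℤ) (1:ℂ) :=
  HahnSeries.ofPowerSeries_X

lemma oP_algebraMap (c : ℂ) : oP (algebraMap ℂ PS c) = algebraMap ℂ LS c := rfl

lemma hxx : xinv * HahnSeries.single (1:ℤ) (1:ℂ) = 1 := by
  rw [mul_comm]; exact X_mul_xinv

lemma mulVec_map {a b : ℕ} {R S : Type*} [CommRing R] [CommRing S] (f : R →+* S)
    (M : Matrix (Fin a) (Fin b) R) (v : Fin b → R) :
    (M.map f).mulVec (fun j => f (v j)) = fun i => f (M.mulVec v i) := by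
  funext i
  simp [Matrix.mulVec, dotProduct, map_sum]

lemma mulVec_mulLeft {R : Type*} [CommRing R] {a b : ℕ} (M : Matrix (Fin a) (Fin b) R)
    (c : R) (w : Fin b → R) :
    M.mulVec (fun j => c * w j) = fun i => c * M.mulVec w i := by
  funext i
  simp only [Matrix.mulVec, dotProduct, Finset.mul_sum]
  exact Finset.sum_congr rfl fun j _ => by ring

/-- scalar multiple of a matrix, without `•`. -/
def sm {a b : ℕ} (x : LS) (M : Matrix (Fin a) (Fin b) LS) : Matrix (Fin a) (Fin b) LS :=
  Matrix.of fun i j => x * M i j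

lemma sm_mul {a b c : ℕ} (x : LS) (M : Matrix (Fin a) (Fin b) LS)
    (N : Matrix (Fin b) (Fin c) LS) : sm x M * N = sm x (M * N) := by
  refine Matrix.ext fun i j => ?_
  simp only [sm, Matrix.mul_apply, Matrix.of_apply, Finset.mul_sum]
  exact Finset.sum_congr rfl fun l _ => by ring

lemma mul_sm {a b c : ℕ} (x : LS) (M : Matrix (Fin a) (Fin b) LS)
    (N : Matrix (Fin b) (Fin c) LS) : M * sm x N = sm x (M * N) := by
  refine Matrix.ext fun i j => ?_
  simp only [sm, Matrix.mul_apply, Matrix.of_apply, Finset.mul_sum]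
  exact Finset.sum_congr rfl fun l _ => by ring

lemma sm_sm {a b : ℕ} (x y : LS) (M : Matrix (Fin a) (Fin b) LS) :
    sm x (sm y M) = sm (x * y) M := by
  refine Matrix.ext fun i j => ?_
  simp only [sm, Matrix.of_apply]
  ring

lemma sm_one {a b : ℕ} (M : Matrix (Fin a) (Fin b) LS) : sm 1 M = M := by
  refine Matrix.ext fun i j => ?_
  simp [sm]

variable {n m p : ℕ} (A : Matrix (Fin n) (Fin n) ℂ) (B : Matrix (Fin n) (Fin m) ℂ)
  (C : Matrix (Fin p) (Fin n) ℂ) (D : Matrix (Fin p) (Fin m) ℂ)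

lemma map_X_smul {a b : ℕ} (M : Matrix (Fin a) (Fin b) PS) :
    (((PowerSeries.X : PS) • M).map (oP : PS →+* LS))
      = sm (HahnSeries.single (1:ℤ) (1:ℂ)) (M.map (oP : PS →+* LS)) := by
  refine Matrix.ext fun i j => ?_
  rw [Matrix.map_apply, Matrix.smul_apply, smul_eq_mul, map_mul, oP_X]
  rfl

lemma const_map_psi {a b : ℕ} (M : Matrix (Fin a) (Fin b) ℂ) :
    (M.map (algebraMap ℂ (RatFunc ℂ))).map (psi : RatFunc ℂ →+* LS)
      = (M.map (algebraMap ℂ PS)).map (oP : PS →+* LS) := by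
  refine Matrix.ext fun i j => ?_
  rw [Matrix.map_apply, Matrix.map_apply, Matrix.map_apply, Matrix.map_apply, psi_C,
    oP_algebraMap]

lemma G_map_psi :
    (transferMatrix A B C D).map (psi : RatFunc ℂ →+* LS)
      = (Hser A B C D).map (oP : PS →+* LS) := by
  classical
  set Ez := (RatFunc.X : RatFunc ℂ) • (1 : Matrix (Fin n) (Fin n) (RatFunc ℂ))
      - A.map (algebraMap ℂ (RatFunc ℂ)) with hEzdef
  set EL := (Eser A).map (oP : PS →+* LS) with hELdef
  set RL := (Rser A).map (oP : PS →+* LS) with hRLdef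
  set xL := HahnSeries.single (1:ℤ) (1:ℂ) with hxLdef
  have hER : EL * RL = 1 := by
    rw [hELdef, hRLdef, ← Matrix.map_mul, E_mul_R, Matrix.map_one _ (map_zero _) (map_one _)]
  have hRE : RL * EL = 1 := by
    rw [hELdef, hRLdef, ← Matrix.map_mul, R_mul_E, Matrix.map_one _ (map_zero _) (map_one _)]
  have hEzpsi : Ez.map (psi : RatFunc ℂ →+* LS) = sm xinv EL := by
    refine Matrix.ext fun i j => ?_
    rw [Matrix.map_apply, hEzdef]
    show psi ((RatFunc.X • (1 : Matrix (Fin n) (Fin n) (RatFunc ℂ))) i j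
        - (A.map (algebraMap ℂ (RatFunc ℂ))) i j) = xinv * ((Eser A).map (oP : PS →+* LS) i j)
    rw [Matrix.smul_apply, Matrix.map_apply, smul_eq_mul, Matrix.map_apply, Eser,
      Matrix.sub_apply, Matrix.smul_apply, Matrix.map_apply, smul_eq_mul]
    simp only [map_sub, map_mul]
    rw [psi_X, psi_C, oP_X, oP_algebraMap, mul_sub]
    by_cases h : i = j
    · subst h
      rw [Matrix.one_apply_eq, Matrix.one_apply_eq, map_one, map_one, mul_one,
        ← mul_assoc, hxx, one_mul]
    · rw [Matrix.one_apply_ne h, Matrix.one_apply_ne h, map_zero, map_zero, mul_zero,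
        ← mul_assoc, hxx, one_mul]
  have claim2 : (sm xinv EL) * (sm xL RL) = 1 := by
    rw [sm_mul, mul_sm, sm_sm, hxx, sm_one, hER]
  have claim2' : (sm xL RL) * (sm xinv EL) = 1 := by
    rw [sm_mul, mul_sm, sm_sm, hxLdef, X_mul_xinv, sm_one, hRE]
  have hdet : IsUnit (Ez.map (psi : RatFunc ℂ →+* LS)).det := by
    rw [hEzpsi]
    exact IsUnit.of_mul_eq_one _ (by rw [← Matrix.det_mul, claim2, Matrix.det_one])
  have hdetEz : Ez.det ≠ 0 := by
    intro h0
    have h1 : psi Ez.det = (Ez.map (psi : RatFunc ℂ →+* LS)).det := RingHom.map_det psi Ez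
    rw [h0, map_zero] at h1
    rw [← h1] at hdet
    exact not_isUnit_zero hdet
  have hinv1 : Ez * Ez⁻¹ = 1 := Matrix.mul_nonsing_inv _ (isUnit_iff_ne_zero.mpr hdetEz)
  have hinvpsi : (Ez⁻¹).map (psi : RatFunc ℂ →+* LS) = sm xL RL := by
    have h1 : (Ez.map (psi : RatFunc ℂ →+* LS)) * ((Ez⁻¹).map psi) = 1 := by
      rw [← Matrix.map_mul, hinv1, Matrix.map_one _ (map_zero _) (map_one _)]
    calc (Ez⁻¹).map (psi : RatFunc ℂ →+* LS)
        = 1 * (Ez⁻¹).map psi := (one_mul _).symm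
      _ = ((sm xL RL) * (sm xinv EL)) * (Ez⁻¹).map psi := by rw [claim2']
      _ = (sm xL RL) * ((Ez.map (psi : RatFunc ℂ →+* LS)) * (Ez⁻¹).map psi) := by
          rw [Matrix.mul_assoc, hEzpsi]
      _ = sm xL RL := by rw [h1, mul_one]
  unfold transferMatrix
  rw [← hEzdef]
  rw [Matrix.map_add _ (fun a b => map_add psi a b), Matrix.map_mul, Matrix.map_mul, hinvpsi,
    Hser, Matrix.map_add _ (fun a b => map_add (oP : PS →+* LS) a b),
    map_X_smul, Matrix.map_mul, Matrix.map_mul, const_map_psi, const_map_psi, const_map_psi,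
    ← hRLdef, mul_sm, sm_mul, ← hxLdef]
  exact add_comm _ _

lemma rank_iff_ker {a b : ℕ} {K : Type*} [Field K] (G : Matrix (Fin a) (Fin b) K) :
    G.rank = b ↔ LinearMap.ker G.mulVecLin = ⊥ := by
  have hr := LinearMap.finrank_range_add_finrank_ker G.mulVecLin
  rw [Module.finrank_fin_fun] at hr
  have hdef : G.rank = Module.finrank K (LinearMap.range G.mulVecLin) := rfl
  constructor
  · intro h
    have h0 : Module.finrank K (LinearMap.ker G.mulVecLin) = 0 := by omega
    exact Submodule.finrank_eq_zero.mp h0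
  · intro h
    rw [h, finrank_bot] at hr
    omega

lemma exists_left_inverse {a b : ℕ} {K : Type*} [Field K] (G : Matrix (Fin a) (Fin b) K)
    (h : LinearMap.ker G.mulVecLin = ⊥) : ∃ Lm : Matrix (Fin b) (Fin a) K, Lm * G = 1 := by
  obtain ⟨g, hg⟩ := LinearMap.exists_leftInverse_of_injective G.mulVecLin h
  refine ⟨LinearMap.toMatrix' g, ?_⟩
  have h2 := congrArg LinearMap.toMatrix' hg
  rw [LinearMap.toMatrix'_comp, ← Matrix.toLin'_apply', LinearMap.toMatrix'_toLin',
    LinearMap.toMatrix'_id] at h2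
  exact h2

end NRL
end Bridge

open NRL

/-- `G` has full column normal rank `m` over `ℂ(z)` iff the system has a
left inverse in the time-domain sense: zero output from zero initial state forces the
input to be zero. -/
theorem normalrank_eq_iff_leftInverse {n m p : ℕ} (A : Matrix (Fin n) (Fin n) ℂ)
    (B : Matrix (Fin n) (Fin m) ℂ) (C : Matrix (Fin p) (Fin n) ℂ)
    (D : Matrix (Fin p) (Fin m) ℂ) :
    (transferMatrix A B C D).rank = m ↔
    ∀ u : ℕ → Fin m → ℂ,
      (∀ k, C.mulVec (trajZero A B u k) + D.mulVec (u k) = 0) → ∀ k, u k = 0 := by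
  constructor
  · intro hrank u hy k
    have hker : LinearMap.ker (transferMatrix A B C D).mulVecLin = ⊥ :=
      (rank_iff_ker _).mp hrank
    obtain ⟨Lm, hLm⟩ := exists_left_inverse _ hker
    have hH : (Hser A B C D).mulVec (fun j => PowerSeries.mk fun t => u t j) = 0 :=
      (output_zero_iff A B C D u).mp hy
    have hGL : ((transferMatrix A B C D).map (psi : RatFunc ℂ →+* LS)).mulVec
        (fun j => oP (PowerSeries.mk fun t => u t j)) = 0 := by
      rw [G_map_psi, mulVec_map (oP : PS →+* LS), hH]
      funext i
      simp
    have hLG : (Lm.map (psi : RatFunc ℂ →+* LS))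
        * ((transferMatrix A B C D).map psi) = 1 := by
      rw [← Matrix.map_mul, hLm, Matrix.map_one _ (map_zero _) (map_one _)]
    have hU0 : (fun j => oP (PowerSeries.mk fun t => u t j)) = (0 : Fin m → LS) := by
      calc (fun j => oP (PowerSeries.mk fun t => u t j))
          = (1 : Matrix (Fin m) (Fin m) LS).mulVec
              (fun j => oP (PowerSeries.mk fun t => u t j)) := (Matrix.one_mulVec _).symm
        _ = ((Lm.map (psi : RatFunc ℂ →+* LS))
              * ((transferMatrix A B C D).map psi)).mulVec
              (fun j => oP (PowerSeries.mk fun t => u t j)) := by rw [hLG]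
        _ = (Lm.map (psi : RatFunc ℂ →+* LS)).mulVec
              (((transferMatrix A B C D).map psi).mulVec
                (fun j => oP (PowerSeries.mk fun t => u t j))) := by
            rw [← Matrix.mulVec_mulVec]
        _ = 0 := by rw [hGL, Matrix.mulVec_zero]
    funext j
    have h1 : oP (PowerSeries.mk fun t => u t j) = 0 := congrFun hU0 j
    have h2 : (PowerSeries.mk fun t => u t j) = 0 := by
      apply oP_injective
      rw [h1, map_zero]
    have h3 := congrArg (PowerSeries.coeff k) h2
    simpa using h3
  · intro hinv
    rw [rank_iff_ker, Submodule.eq_bot_iff]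
    intro v hv
    by_contra hvne
    have hGv : (transferMatrix A B C D).mulVec v = 0 := hv
    obtain ⟨b, hb⟩ := IsLocalization.exist_integer_multiples
      (nonZeroDivisors (Polynomial ℂ)) Finset.univ v
    choose v' hv' using fun i => hb i (Finset.mem_univ i)
    set M := Finset.univ.sup (fun i => (v' i).natDegree) with hM
    have hdeg : ∀ i, (v' i).natDegree ≤ M := fun i => Finset.le_sup (f := fun i => (v' i).natDegree) (Finset.mem_univ i)
    have hGv' : (transferMatrix A B C D).mulVec
        (fun i => algebraMap (Polynomial ℂ) (RatFunc ℂ) (v' i)) = 0 := by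
      have hvmap : (fun i => algebraMap (Polynomial ℂ) (RatFunc ℂ) (v' i))
          = fun i => algebraMap (Polynomial ℂ) (RatFunc ℂ) (b : Polynomial ℂ) * v i := by
        funext i
        rw [hv' i, Algebra.smul_def]
      rw [hvmap, mulVec_mulLeft, hGv]
      funext i
      simp
    have hGpsi : ((transferMatrix A B C D).map (psi : RatFunc ℂ →+* LS)).mulVec
        (fun i => psi (algebraMap (Polynomial ℂ) (RatFunc ℂ) (v' i))) = 0 := by
      rw [mulVec_map psi, hGv']
      funext i
      simp
    have hW : (fun i => HahnSeries.single (M:ℤ) (1:ℂ)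
          * psi (algebraMap (Polynomial ℂ) (RatFunc ℂ) (v' i)))
        = fun i => oP (((Polynomial.reflect M (v' i) : Polynomial ℂ) : PS)) := by
      funext i
      rw [psi_algebraMap, bridge M (v' i) (hdeg i)]
      rfl
    have hHU' : ((transferMatrix A B C D).map (psi : RatFunc ℂ →+* LS)).mulVec
        (fun i => oP (((Polynomial.reflect M (v' i) : Polynomial ℂ) : PS))) = 0 := by
      rw [← hW, mulVec_mulLeft, hGpsi]
      funext i
      simp
    have hH0 : (Hser A B C D).mulVec
        (fun i => ((Polynomial.reflect M (v' i) : Polynomial ℂ) : PS)) = 0 := by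
      rw [G_map_psi] at hHU'
      rw [mulVec_map (oP : PS →+* LS)] at hHU'
      funext i
      apply oP_injective
      simpa using congrFun hHU' i
    set u : ℕ → Fin m → ℂ :=
      fun k i => PowerSeries.coeff k (((Polynomial.reflect M (v' i) : Polynomial ℂ) : PS))
      with hu
    have hmk : (fun j => PowerSeries.mk fun t => u t j)
        = fun i => ((Polynomial.reflect M (v' i) : Polynomial ℂ) : PS) := by
      funext j
      exact PowerSeries.ext fun t => by rw [PowerSeries.coeff_mk]
    have hy : ∀ k, C.mulVec (trajZero A B u k) + D.mulVec (u k) = 0 := by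
      apply (output_zero_iff A B C D u).mpr
      rw [hmk, hH0]
    have hu0 := hinv u hy
    obtain ⟨i0, hi0⟩ := Function.ne_iff.mp hvne
    have hvi0 : v' i0 ≠ 0 := by
      intro h0
      apply hi0
      have h1 := hv' i0
      rw [h0, map_zero] at h1
      have hb0 : algebraMap (Polynomial ℂ) (RatFunc ℂ) (b : Polynomial ℂ) ≠ 0 := by
        intro hc
        exact nonZeroDivisors.ne_zero b.2 (IsFractionRing.injective (Polynomial ℂ) (RatFunc ℂ)
          (by rw [hc, map_zero]))
      have h2 := h1.symm
      rw [Algebra.smul_def] at h2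
      exact (mul_eq_zero.mp h2).resolve_left hb0
    have hrefl0 : Polynomial.reflect M (v' i0) = 0 := by
      have hU'0 : ((Polynomial.reflect M (v' i0) : Polynomial ℂ) : PS) = 0 := by
        refine PowerSeries.ext fun t => ?_
        have h4 := congrFun (hu0 t) i0
        rw [hu] at h4
        simpa using h4
      exact_mod_cast Polynomial.coe_eq_zero_iff.mp hU'0
    have hd : (v' i0).natDegree ≤ M := hdeg i0
    have hlead : (Polynomial.reflect M (v' i0)).coeff (M - (v' i0).natDegree)
        = (v' i0).leadingCoeff := by
      rw [Polynomial.coeff_reflect, Polynomial.revAt_le (Nat.sub_le _ _)]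
      congr 1
      omega
    rw [hrefl0, Polynomial.coeff_zero] at hlead
    exact hvi0 (Polynomial.leadingCoeff_eq_zero.mp hlead.symm)
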